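/- Under the hypotheses on the Laurent series x_1(t), …, x_m(t), the leading coefficients satisfy p_{1,0} = p_{2,0} = ⋯ = p_{m,0} = 1. -/

import Mathlib

open Finset

/-- `dseq a i` is `gcd(a 1, …, a i)`. -/
def dseq (a : ℕ → ℕ) (i : ℕ) : ℕ := Finset.gcd (Finset.Icc 1 i) a

/-- `BAm m a ℓ` says that the tuple `(ℓ 1, …, ℓ m)` belongs to `B(A_m)`. -/
def BAm (m : ℕ) (a : ℕ → ℕ) (ℓ : ℕ → ℕ) : Prop :=
  (∀ j, (j < 1 ∨ m < j) → ℓ j = 0) ∧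
    ∀ i, 2 ≤ i → i ≤ m → ℓ i < dseq a (i - 1) / dseq a i

/-- `Telescopic m a` says that `(a 1, …, a m)` is a telescopic sequence. -/
def Telescopic (m : ℕ) (a : ℕ → ℕ) : Prop :=
  2 ≤ m ∧ (∀ i, 1 ≤ i → i ≤ m → 2 ≤ a i) ∧ dseq a m = 1 ∧
    ∀ i, 2 ≤ i → i ≤ m → ∃ ℓ : ℕ → ℕ, (∀ j, (j < 1 ∨ i ≤ j) → ℓ j = 0) ∧
      a i * dseq a (i - 1) = dseq a i * ∑ j ∈ Finset.Icc 1 m, ℓ j * a j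

section AuxHahn

open HahnSeries

lemma my_order_eq {x : LaurentSeries ℂ} {o : ℤ} (h0 : ∀ n, n < o → x.coeff n = 0)
    (h1 : x.coeff o ≠ 0) : x ≠ 0 ∧ x.order = o := by
  have hx : x ≠ 0 := fun h => h1 (by simp [h])
  refine ⟨hx, le_antisymm (order_le_of_coeff_ne_zero h1) (not_lt.1 fun h => ?_)⟩
  have : x.leadingCoeff = 0 := by rw [leadingCoeff_eq]; exact h0 _ h
  exact hx (leadingCoeff_eq_zero.1 this)

lemma my_lc_mul {x y : LaurentSeries ℂ} (hx : x ≠ 0) (hy : y ≠ 0) :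
    (x * y).leadingCoeff = x.leadingCoeff * y.leadingCoeff := by
  rw [leadingCoeff_eq, order_mul hx hy, coeff_mul_order_add_order]

lemma my_prod_facts (s : Finset ℕ) (f : ℕ → LaurentSeries ℂ) (hf : ∀ i ∈ s, f i ≠ 0) :
    (∏ i ∈ s, f i) ≠ 0 ∧ (∏ i ∈ s, f i).order = ∑ i ∈ s, (f i).order ∧
      (∏ i ∈ s, f i).leadingCoeff = ∏ i ∈ s, (f i).leadingCoeff := by
  classical
  induction s using Finset.cons_induction with
  | empty => simp [leadingCoeff_one]
  | cons a s ha ih =>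
    obtain ⟨h1, h2, h3⟩ := ih (fun i hi => hf i (Finset.mem_cons_of_mem hi))
    have hfa := hf a (Finset.mem_cons_self a s)
    refine ⟨by rw [Finset.prod_cons]; exact mul_ne_zero hfa h1, ?_, ?_⟩
    · rw [Finset.prod_cons, Finset.sum_cons, order_mul hfa h1, h2]
    · rw [Finset.prod_cons, Finset.prod_cons, my_lc_mul hfa h1, h3]

lemma my_pow_facts (x : LaurentSeries ℂ) (hx : x ≠ 0) (n : ℕ) :
    x ^ n ≠ 0 ∧ (x ^ n).order = n * x.order ∧ (x ^ n).leadingCoeff = x.leadingCoeff ^ n := by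
  induction n with
  | zero => simp [leadingCoeff_one]
  | succ k ih =>
    obtain ⟨h1, h2, h3⟩ := ih
    refine ⟨mul_ne_zero h1 hx, ?_, ?_⟩
    · rw [pow_succ, order_mul h1 hx, h2]; push_cast; ring
    · rw [pow_succ, pow_succ, my_lc_mul h1 hx, h3]

lemma my_inv_facts (x : LaurentSeries ℂ) (hx : x ≠ 0) :
    x⁻¹ ≠ 0 ∧ (x⁻¹).order = -x.order ∧ (x⁻¹).leadingCoeff = (x.leadingCoeff)⁻¹ := by
  have h1 : x * x⁻¹ = 1 := mul_inv_cancel₀ hx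
  have hinv : x⁻¹ ≠ 0 := inv_ne_zero hx
  have ho : x.order + (x⁻¹).order = 0 := by
    rw [← order_mul hx hinv, h1, order_one]
  have hc : x.leadingCoeff * (x⁻¹).leadingCoeff = 1 := by
    rw [← my_lc_mul hx hinv, h1, leadingCoeff_one]
  exact ⟨hinv, by linarith, eq_inv_of_mul_eq_one_right hc⟩

lemma my_zpow_facts (x : LaurentSeries ℂ) (hx : x ≠ 0) (n : ℤ) :
    x ^ n ≠ 0 ∧ (x ^ n).order = n * x.order ∧ (x ^ n).leadingCoeff = x.leadingCoeff ^ n := by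
  cases n with
  | ofNat k =>
    obtain ⟨h1, h2, h3⟩ := my_pow_facts x hx k
    simp only [Int.ofNat_eq_coe, zpow_natCast]
    exact ⟨h1, h2, h3⟩
  | negSucc k =>
    obtain ⟨h1, h2, h3⟩ := my_pow_facts x hx (k + 1)
    obtain ⟨g1, g2, g3⟩ := my_inv_facts _ h1
    refine ⟨by rwa [zpow_negSucc], ?_, ?_⟩
    · rw [zpow_negSucc, g2, h2, Int.negSucc_eq]; push_cast; ring
    · rw [zpow_negSucc, g3, h3, zpow_negSucc]

lemma my_sum_coeff {ι : Type*} (s : Finset ι) (f : ι → LaurentSeries ℂ) (n : ℤ) :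
    (∑ i ∈ s, f i).coeff n = ∑ i ∈ s, (f i).coeff n := by
  classical
  induction s using Finset.cons_induction with
  | empty => simp
  | cons a s ha ih => rw [Finset.sum_cons, Finset.sum_cons, HahnSeries.coeff_add, ih]

end AuxHahn

section AuxDseq

lemma dseq_dvd_a (a : ℕ → ℕ) {i j : ℕ} (h1 : 1 ≤ j) (h2 : j ≤ i) : dseq a i ∣ a j :=
  Finset.gcd_dvd (Finset.mem_Icc.2 ⟨h1, h2⟩)

lemma dseq_dvd_dseq (a : ℕ → ℕ) {i j : ℕ} (h : j ≤ i) : dseq a i ∣ dseq a j :=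
  Finset.dvd_gcd fun k hk => Finset.gcd_dvd
    (Finset.mem_Icc.2 ⟨(Finset.mem_Icc.1 hk).1, le_trans (Finset.mem_Icc.1 hk).2 h⟩)

lemma dseq_pos (a : ℕ → ℕ) {i : ℕ} (hi : 1 ≤ i) (ha : 2 ≤ a 1) : 0 < dseq a i := by
  rcases Nat.eq_zero_or_pos (dseq a i) with h | h
  · have hd := dseq_dvd_a a le_rfl hi
    rw [h] at hd
    have := zero_dvd_iff.1 hd
    omega
  · exact h

lemma my_div_mul_div {A d d' : ℕ} (hd : 0 < d) (h1 : d ∣ A) (h2 : d' ∣ d) :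
    A / d * (d / d') = A / d' := by
  rw [Nat.div_mul_div_comm h1 h2, mul_comm A d, Nat.mul_div_mul_left _ _ hd]

end AuxDseq

lemma my_zpow_sum (c : ℂ) (hc : c ≠ 0) (s : Finset ℕ) (f : ℕ → ℤ) :
    c ^ (∑ j ∈ s, f j) = ∏ j ∈ s, c ^ f j := by
  classical
  induction s using Finset.cons_induction with
  | empty => simp
  | cons a s ha ih => rw [Finset.sum_cons, Finset.prod_cons, zpow_add₀ hc, ih]

/-- Suppose the Laurent series `x 1, …, x m ∈ ℂ((t))` have the form
`x i = t^{−a i}·Σ_{k≥0} p_{i,k} t^k` with `p_{i,0} ≠ 0` (hypotheses `hord`, `hlead`),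
satisfy the defining equations `F_i(x 1, …, x m) = 0` of the telescopic curve
(hypothesis `hF`, where `ℓmat i` is the unique `B(A_m)`-representation of
`a i * d(i−1)/d i` and `lam i J` are the coefficients `λ^{(i)}_J`, summed over the
finite set `S i` of all `J ∈ B(A_m)` with `Σ_k a k * J k < a i * d(i−1)/d i`),
and satisfy `x 1 ^ b 1 ⋯ x m ^ b m = t` where `Σ a j * b j = −1` (hypothesis `ht`).
Then the leading coefficients satisfy `p_{1,0} = ⋯ = p_{m,0} = 1`. -/
theorem leading_coeff_eq_one (m : ℕ) (a : ℕ → ℕ) (hT : Telescopic m a)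
    (ℓmat : ℕ → ℕ → ℕ)
    (hℓ : ∀ i, 2 ≤ i → i ≤ m → BAm m a (ℓmat i) ∧
      dseq a i * ∑ j ∈ Finset.Icc 1 m, a j * ℓmat i j = a i * dseq a (i - 1))
    (lam : ℕ → (ℕ → ℕ) → ℂ)
    (S : ℕ → Finset (ℕ → ℕ))
    (hS : ∀ i, 2 ≤ i → i ≤ m → ∀ J : ℕ → ℕ, J ∈ S i ↔ (BAm m a J ∧
      dseq a i * ∑ k ∈ Finset.Icc 1 m, a k * J k < a i * dseq a (i - 1)))
    (b : ℕ → ℤ) (hb : ∑ j ∈ Finset.Icc 1 m, (a j : ℤ) * b j = -1)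
    (x : ℕ → LaurentSeries ℂ)
    (hord : ∀ i, 1 ≤ i → i ≤ m → ∀ n : ℤ, n < -(a i : ℤ) → (x i).coeff n = 0)
    (hlead : ∀ i, 1 ≤ i → i ≤ m → (x i).coeff (-(a i : ℤ)) ≠ 0)
    (hF : ∀ i, 2 ≤ i → i ≤ m →
      x i ^ (dseq a (i - 1) / dseq a i) =
        ∏ j ∈ Finset.Icc 1 (i - 1), x j ^ ℓmat i j +
          ∑ J ∈ S i, lam i J • ∏ j ∈ Finset.Icc 1 m, x j ^ J j)
    (ht : ∏ j ∈ Finset.Icc 1 m, x j ^ b j = HahnSeries.single (1 : ℤ) (1 : ℂ)) :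
    ∀ i, 1 ≤ i → i ≤ m → (x i).coeff (-(a i : ℤ)) = 1 := by
  obtain ⟨hm2, ha, hdm, -⟩ := hT
  have ha1 : 2 ≤ a 1 := ha 1 le_rfl (by omega)
  set p : ℕ → ℂ := fun j => (x j).coeff (-(a j : ℤ)) with hp
  have hxf : ∀ j, 1 ≤ j → j ≤ m →
      x j ≠ 0 ∧ (x j).order = -(a j : ℤ) ∧ (x j).leadingCoeff = p j := by
    intro j h1 h2
    obtain ⟨hne, hordj⟩ := my_order_eq (fun n hn => hord j h1 h2 n hn) (hlead j h1 h2)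
    exact ⟨hne, hordj, by rw [HahnSeries.leadingCoeff_eq, hordj]⟩
  have hpne : ∀ j, 1 ≤ j → j ≤ m → p j ≠ 0 := hlead
  -- Step 1 : product relation from `ht`
  have hprod : ∏ j ∈ Icc 1 m, p j ^ (b j) = 1 := by
    have hne : ∀ j ∈ Icc 1 m, x j ^ b j ≠ 0 := by
      intro j hj
      obtain ⟨hj1, hj2⟩ := Finset.mem_Icc.1 hj
      exact (my_zpow_facts _ ((hxf j hj1 hj2).1) _).1
    obtain ⟨-, -, h3⟩ := my_prod_facts (Icc 1 m) (fun j => x j ^ b j) hne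
    have hlcs := congrArg HahnSeries.leadingCoeff ht
    rw [h3, HahnSeries.leadingCoeff_of_single] at hlcs
    rw [← hlcs]
    refine Finset.prod_congr rfl fun j hj => ?_
    obtain ⟨hj1, hj2⟩ := Finset.mem_Icc.1 hj
    rw [(my_zpow_facts _ ((hxf j hj1 hj2).1) _).2.2, (hxf j hj1 hj2).2.2]
  -- Step 2 : leading-term relations from `hF`
  have key : ∀ i, 2 ≤ i → i ≤ m →
      (∑ j ∈ Icc 1 (i - 1), a j * ℓmat i j = a i * (dseq a (i - 1) / dseq a i)) ∧
      p i ^ (dseq a (i - 1) / dseq a i) = ∏ j ∈ Icc 1 (i - 1), p j ^ ℓmat i j := by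
    intro i h2i him
    set e := dseq a (i - 1) / dseq a i with he
    have hdipos : 0 < dseq a i := dseq_pos a (by omega) ha1
    have hdl : dseq a i ∣ dseq a (i - 1) := dseq_dvd_dseq a (by omega)
    have hde : dseq a (i - 1) = dseq a i * e := (Nat.mul_div_cancel' hdl).symm
    have hsumfull : ∑ j ∈ Icc 1 m, a j * ℓmat i j = a i * e := by
      refine Nat.eq_of_mul_eq_mul_left hdipos ?_
      rw [(hℓ i h2i him).2, hde]; ring
    have hsub : Icc 1 (i - 1) ⊆ Icc 1 m := Finset.Icc_subset_Icc le_rfl (by omega)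
    have hle : ∑ j ∈ Icc 1 (i - 1), a j * ℓmat i j ≤ a i * e := by
      rw [← hsumfull]
      exact Finset.sum_le_sum_of_subset hsub
    -- facts about P
    have hPne : ∀ j ∈ Icc 1 (i - 1), x j ^ ℓmat i j ≠ 0 := by
      intro j hj
      obtain ⟨hj1, hj2⟩ := Finset.mem_Icc.1 hj
      exact (my_pow_facts _ ((hxf j hj1 (by omega)).1) _).1
    obtain ⟨hP1, hP2, hP3⟩ := my_prod_facts (Icc 1 (i - 1)) (fun j => x j ^ ℓmat i j) hPne
    have hPord : (∏ j ∈ Icc 1 (i - 1), x j ^ ℓmat i j).order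
        = -((∑ j ∈ Icc 1 (i - 1), a j * ℓmat i j : ℕ) : ℤ) := by
      rw [hP2]
      push_cast
      rw [← Finset.sum_neg_distrib]
      refine Finset.sum_congr rfl fun j hj => ?_
      obtain ⟨hj1, hj2⟩ := Finset.mem_Icc.1 hj
      rw [(my_pow_facts _ ((hxf j hj1 (by omega)).1) _).2.1, (hxf j hj1 (by omega)).2.1]
      ring
    -- facts about LHS
    obtain ⟨hL1, hL2, hL3⟩ := my_pow_facts (x i) ((hxf i (by omega) him).1) e
    have hLord : (x i ^ e).order = -((a i * e : ℕ) : ℤ) := by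
      rw [hL2, (hxf i (by omega) him).2.1]; push_cast; ring
    set n₀ : ℤ := -((a i * e : ℕ) : ℤ) with hn₀
    have hcoeff := congrArg (fun z : LaurentSeries ℂ => z.coeff n₀) (hF i h2i him)
    simp only [HahnSeries.coeff_add, my_sum_coeff] at hcoeff
    -- the lambda sum contributes zero
    have hQ : ∀ J ∈ S i, (lam i J • ∏ j ∈ Icc 1 m, x j ^ J j).coeff n₀ = 0 := by
      intro J hJ
      have hJ' := ((hS i h2i him J).1 hJ).2
      have hJlt : ∑ k ∈ Icc 1 m, a k * J k < a i * e := by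
        refine Nat.lt_of_mul_lt_mul_left (a := dseq a i) ?_
        calc dseq a i * ∑ k ∈ Icc 1 m, a k * J k < a i * dseq a (i - 1) := hJ'
        _ = dseq a i * (a i * e) := by rw [hde]; ring
      have hJne : ∀ j ∈ Icc 1 m, x j ^ J j ≠ 0 := by
        intro j hj
        obtain ⟨hj1, hj2⟩ := Finset.mem_Icc.1 hj
        exact (my_pow_facts _ ((hxf j hj1 hj2).1) _).1
      obtain ⟨hJ1, hJ2, -⟩ := my_prod_facts (Icc 1 m) (fun j => x j ^ J j) hJne
      have hJord : (∏ j ∈ Icc 1 m, x j ^ J j).order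
          = -((∑ j ∈ Icc 1 m, a j * J j : ℕ) : ℤ) := by
        rw [hJ2]
        push_cast
        rw [← Finset.sum_neg_distrib]
        refine Finset.sum_congr rfl fun j hj => ?_
        obtain ⟨hj1, hj2⟩ := Finset.mem_Icc.1 hj
        rw [(my_pow_facts _ ((hxf j hj1 hj2).1) _).2.1, (hxf j hj1 hj2).2.1]
        ring
      have hlt : n₀ < (∏ j ∈ Icc 1 m, x j ^ J j).order := by
        rw [hJord, hn₀]
        have : ((∑ j ∈ Icc 1 m, a j * J j : ℕ) : ℤ) < ((a i * e : ℕ) : ℤ) := by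
          exact_mod_cast hJlt
        omega
      rw [HahnSeries.coeff_smul, HahnSeries.coeff_eq_zero_of_lt_order hlt, smul_zero]
    have hQ0 : ∑ J ∈ S i, (lam i J • ∏ j ∈ Icc 1 m, x j ^ J j).coeff n₀ = 0 :=
      Finset.sum_eq_zero hQ
    have hLc : (x i ^ e).coeff n₀ = p i ^ e := by
      rw [← hLord, ← HahnSeries.leadingCoeff_eq, hL3, (hxf i (by omega) him).2.2]
    rcases lt_or_eq_of_le hle with hlt | heq
    · exfalso
      have hPlt : n₀ < (∏ j ∈ Icc 1 (i - 1), x j ^ ℓmat i j).order := by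
        rw [hPord, hn₀]
        have : ((∑ j ∈ Icc 1 (i - 1), a j * ℓmat i j : ℕ) : ℤ) < ((a i * e : ℕ) : ℤ) := by
          exact_mod_cast hlt
        omega
      rw [hLc, HahnSeries.coeff_eq_zero_of_lt_order hPlt, hQ0, add_zero] at hcoeff
      exact pow_ne_zero e (hpne i (by omega) him) hcoeff
    · refine ⟨heq, ?_⟩
      have hPc : (∏ j ∈ Icc 1 (i - 1), x j ^ ℓmat i j).coeff n₀
          = ∏ j ∈ Icc 1 (i - 1), p j ^ ℓmat i j := by
        have hn₀' : n₀ = (∏ j ∈ Icc 1 (i - 1), x j ^ ℓmat i j).order := by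
          rw [hPord, hn₀, heq]
        rw [hn₀', ← HahnSeries.leadingCoeff_eq, hP3]
        refine Finset.prod_congr rfl fun j hj => ?_
        obtain ⟨hj1, hj2⟩ := Finset.mem_Icc.1 hj
        rw [(my_pow_facts _ ((hxf j hj1 (by omega)).1) _).2.2, (hxf j hj1 (by omega)).2.2]
      rw [hLc, hPc, hQ0, add_zero] at hcoeff
      exact hcoeff
  -- Step 3 : the combinatorial induction
  have claim : ∀ i, 1 ≤ i → i ≤ m → ∀ j k, 1 ≤ j → j ≤ i → 1 ≤ k → k ≤ i →
      p j ^ (a k / dseq a i) = p k ^ (a j / dseq a i) := by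
    intro i hi1
    induction i, hi1 using Nat.le_induction with
    | base =>
      intro _ j k hj1 hj2 hk1 hk2
      have : j = 1 := by omega
      have : k = 1 := by omega
      subst_vars
      rfl
    | succ i hi1 ih =>
      intro him j k hj1 hj2 hk1 hk2
      have hIH := ih (by omega)
      have hDpos : 0 < dseq a i := dseq_pos a hi1 ha1
      have hD'pos : 0 < dseq a (i + 1) := dseq_pos a (by omega) ha1
      have hdd : dseq a (i + 1) ∣ dseq a i := dseq_dvd_dseq a (by omega)
      have hexp : ∀ t, 1 ≤ t → t ≤ i →
          a t / dseq a i * (dseq a i / dseq a (i + 1)) = a t / dseq a (i + 1) :=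
        fun t h1 h2 => my_div_mul_div hDpos (dseq_dvd_a a h1 h2) hdd
      obtain ⟨hsum', hrel'⟩ := key (i + 1) (by omega) him
      simp only [Nat.add_sub_cancel] at hsum' hrel'
      have hnew : ∀ k, 1 ≤ k → k ≤ i →
          p (i + 1) ^ (a k / dseq a (i + 1)) = p k ^ (a (i + 1) / dseq a (i + 1)) := by
        intro k hk1 hk2
        have hsum2 : ∑ t ∈ Icc 1 i, a t / dseq a i * ℓmat (i + 1) t
            = a (i + 1) / dseq a (i + 1) := by
          refine Nat.eq_of_mul_eq_mul_left hDpos ?_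
          rw [Finset.mul_sum]
          have h1 : ∀ t ∈ Icc 1 i, dseq a i * (a t / dseq a i * ℓmat (i + 1) t)
              = a t * ℓmat (i + 1) t := by
            intro t ht
            obtain ⟨ht1, ht2⟩ := Finset.mem_Icc.1 ht
            rw [← mul_assoc, Nat.mul_div_cancel' (dseq_dvd_a a ht1 ht2)]
          rw [Finset.sum_congr rfl h1, hsum',
            ← Nat.mul_div_assoc (a (i + 1)) hdd,
            ← Nat.mul_div_assoc (dseq a i)
              (dseq_dvd_a a (by omega) (le_refl (i + 1)) : dseq a (i + 1) ∣ a (i + 1)),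
            mul_comm (a (i + 1)) (dseq a i)]
        calc p (i + 1) ^ (a k / dseq a (i + 1))
            = p (i + 1) ^ (dseq a i / dseq a (i + 1) * (a k / dseq a i)) := by
              rw [mul_comm, hexp k hk1 hk2]
          _ = (p (i + 1) ^ (dseq a i / dseq a (i + 1))) ^ (a k / dseq a i) := by
              rw [pow_mul]
          _ = (∏ t ∈ Icc 1 i, p t ^ ℓmat (i + 1) t) ^ (a k / dseq a i) := by rw [hrel']
          _ = ∏ t ∈ Icc 1 i, (p t ^ (a k / dseq a i)) ^ ℓmat (i + 1) t := by
              rw [← Finset.prod_pow]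
              refine Finset.prod_congr rfl fun t ht => ?_
              rw [← pow_mul, ← pow_mul, mul_comm]
          _ = ∏ t ∈ Icc 1 i, p k ^ (a t / dseq a i * ℓmat (i + 1) t) := by
              refine Finset.prod_congr rfl fun t ht => ?_
              obtain ⟨ht1, ht2⟩ := Finset.mem_Icc.1 ht
              rw [hIH t k ht1 ht2 hk1 hk2, pow_mul]
          _ = p k ^ (∑ t ∈ Icc 1 i, a t / dseq a i * ℓmat (i + 1) t) := by
              rw [Finset.prod_pow_eq_pow_sum]
          _ = p k ^ (a (i + 1) / dseq a (i + 1)) := by rw [hsum2]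
      rcases eq_or_lt_of_le hj2 with hj | hj
      · rcases eq_or_lt_of_le hk2 with hk | hk
        · rw [hj, hk]
        · rw [hj]; exact hnew k hk1 (by omega)
      · rcases eq_or_lt_of_le hk2 with hk | hk
        · rw [hk]; exact (hnew j hj1 (by omega)).symm
        · have hji : j ≤ i := by omega
          have hki : k ≤ i := by omega
          rw [← hexp k hk1 hki, ← hexp j hj1 hji, pow_mul, pow_mul,
            hIH j k hj1 hji hk1 hki]
  -- Step 4 : conclusion
  intro i hi1 him
  have hpk : ∀ j, 1 ≤ j → j ≤ m → p i ^ a j = p j ^ a i := by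
    intro j hj1 hj2
    have := claim m (by omega) le_rfl i j hi1 him hj1 hj2
    rwa [hdm, Nat.div_one, Nat.div_one] at this
  have h1 : p i ^ (-1 : ℤ) = 1 := by
    calc p i ^ (-1 : ℤ) = p i ^ (∑ j ∈ Icc 1 m, (a j : ℤ) * b j) := by rw [hb]
      _ = ∏ j ∈ Icc 1 m, p i ^ ((a j : ℤ) * b j) :=
          my_zpow_sum (p i) (hpne i hi1 him) _ _
      _ = ∏ j ∈ Icc 1 m, (p j ^ b j) ^ (a i : ℤ) := by
          refine Finset.prod_congr rfl fun j hj => ?_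
          obtain ⟨hj1, hj2⟩ := Finset.mem_Icc.1 hj
          rw [zpow_mul, zpow_natCast, hpk j hj1 hj2, ← zpow_natCast (p j) (a i),
            ← zpow_mul, mul_comm ((a i : ℤ)) (b j), zpow_mul]
      _ = (∏ j ∈ Icc 1 m, p j ^ b j) ^ (a i : ℤ) := Finset.prod_zpow _ _ _
      _ = 1 := by rw [hprod, one_zpow]
  rw [zpow_neg_one, inv_eq_one] at h1
  exact h1
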